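/- The words ABCACBAB and ABCACBAC each occur as a factor of some P^n(A), and each occurs in exactly one position within exactly one product of two blocks from {P(A), P(B), P(C)}. -/
import Mathlib


inductive T where
  | A | B | C
deriving DecidableEq, Repr

open T

def P : T → List T
  | A => [A,B,C,B,A,C,B,C,A,B,C,B,A]
  | B => [B,C,A,C,B,A,C,A,B,C,A,C,B]
  | C => [C,A,B,A,C,B,A,B,C,A,B,A,C]

def Pw (w : List T) : List T := w.flatMap P

def SqFree (w : List T) : Prop := ∀ x : List T, x ≠ [] → ¬ (x ++ x) <:+: w

def rot : T → T
  | A => B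
  | B => C
  | C => A

def rotw (w : List T) : List T := w.map rot

def refT : T → T
  | A => A
  | B => C
  | C => B

def reflw (w : List T) : List T := w.map refT

def OccursAt (w v : List T) (i : ℕ) : Prop := (v.drop i).take w.length = w

instance (w v : List T) (i : ℕ) : Decidable (OccursAt w v i) :=
  decEq _ _

instance : Fintype T := ⟨{T.A, T.B, T.C}, by intro x; cases x <;> simp⟩

lemma len26 (x y : T) : (P x ++ P y).length = 26 := by
  cases x <;> cases y <;> rfl

lemma ibound (w : List T) (hw : w.length = 8) (x y : T) (i : ℕ)
    (h : OccursAt w (P x ++ P y) i) : i < 19 := by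
  by_contra hi
  push_neg at hi
  have hl := congrArg List.length h
  rw [hw] at hl
  rw [List.length_take, List.length_drop, len26] at hl
  omega

lemma uniq (w : List T) (hw : w.length = 8) (p : (T × T) × ℕ)
    (hp : OccursAt w (P p.1.1 ++ P p.1.2) p.2)
    (q : (T × T) × ℕ) (hq : OccursAt w (P q.1.1 ++ P q.1.2) q.2)
    (h : ∀ x y : T, ∀ i : ℕ, i < 19 → OccursAt w (P x ++ P y) i → ((x,y),i) = p) :
    q = p := by
  obtain ⟨⟨x, y⟩, i⟩ := q
  exact h x y i (ibound w hw x y i hq) hq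

theorem stmt14 :
    ((∃ n : ℕ, [A,B,C,A,C,B,A,B] <:+: Pw^[n] [A]) ∧
      (∃! q : (T × T) × ℕ, OccursAt [A,B,C,A,C,B,A,B] (P q.1.1 ++ P q.1.2) q.2)) ∧
    ((∃ n : ℕ, [A,B,C,A,C,B,A,C] <:+: Pw^[n] [A]) ∧
      (∃! q : (T × T) × ℕ, OccursAt [A,B,C,A,C,B,A,C] (P q.1.1 ++ P q.1.2) q.2)) := by
  refine ⟨⟨⟨2, by decide⟩, ⟨((B,A),7), by decide, ?_⟩⟩,
          ⟨⟨2, by decide⟩, ⟨((A,B),12), by decide, ?_⟩⟩⟩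
  · intro q hq
    refine uniq [A,B,C,A,C,B,A,B] rfl _ (by decide) q hq ?_
    decide
  · intro q hq
    refine uniq [A,B,C,A,C,B,A,C] rfl _ (by decide) q hq ?_
    decide
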